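/- Let L ≥ 2, pm : Fin L → ℝ strictly increasing, a : Fin L → ℝ nonnegative, S the multiset of 2L extended metrics. Every element of A = {s ∈ S : s < pm (L/2)} (L even) is among the L smallest elements of S. -/

import Mathlib

/-- Soundness of DTS.1: every accepted candidate (extended metric below
`AT = pm (L/2)`) is among the `L` smallest elements of `S`. -/
theorem dts_accepted_among_L_smallest
    (L : ℕ) (hL : 2 ≤ L) (hLeven : Even L)
    (pm a : Fin L → ℝ)
    (hpm : StrictMono pm)
    (ha : ∀ l, 0 ≤ a l)
    (S : Multiset ℝ)
    (hS : S = (Finset.univ : Finset (Fin L)).val.map pm +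
              (Finset.univ : Finset (Fin L)).val.map (fun l => pm l + a l)) :
    ∀ s ∈ S, s < pm ⟨L / 2, by omega⟩ →
      s ∈ (Multiset.sort S (· ≤ ·)).take L := by
  classical
  intro s hs hlt
  set AT := pm ⟨L / 2, by omega⟩ with hAT
  -- at most L elements of S are < AT
  have key : ∀ (b : Fin L → ℝ), (∀ l, pm l ≤ b l) →
      Multiset.card (Multiset.filter (fun l => b l < AT)
        (Finset.univ : Finset (Fin L)).val) ≤ L / 2 := by
    intro b hb
    have hsub : (Finset.univ : Finset (Fin L)).filter (fun l => b l < AT) ⊆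
        Finset.Iio (⟨L / 2, by omega⟩ : Fin L) := by
      intro l hl
      simp only [Finset.mem_filter] at hl
      have : pm l < AT := lt_of_le_of_lt (hb l) hl.2
      exact Finset.mem_Iio.mpr (hpm.lt_iff_lt.mp this)
    calc Multiset.card (Multiset.filter (fun l => b l < AT)
          (Finset.univ : Finset (Fin L)).val)
        = ((Finset.univ : Finset (Fin L)).filter (fun l => b l < AT)).card := by
          rw [← Finset.filter_val]; rfl
      _ ≤ (Finset.Iio (⟨L / 2, by omega⟩ : Fin L)).card := Finset.card_le_card hsub
      _ = L / 2 := by rw [Fin.card_Iio]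
  have hcount : S.countP (fun x => x < AT) ≤ L := by
    rw [hS, Multiset.countP_add, Multiset.countP_map, Multiset.countP_map]
    have h1 := key pm (fun l => le_refl _)
    have h2 : Multiset.card (Multiset.filter (fun l => pm l + a l < AT)
        (Finset.univ : Finset (Fin L)).val) ≤ L / 2 := by
      simpa using key (fun l => pm l + a l) (fun l => le_add_of_nonneg_right (ha l))
    obtain ⟨k, hk⟩ := hLeven
    omega
  set lst := Multiset.sort S (· ≤ ·) with hlst
  have hsort : lst.Pairwise (· ≤ ·) := Multiset.pairwise_sort _ _
  have hmem : s ∈ lst := (Multiset.mem_sort _).mpr hs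
  by_contra hno
  have hdrop : s ∈ lst.drop L := by
    have heq := List.take_append_drop L lst
    rcases List.mem_append.mp (heq ▸ hmem) with h | h
    · exact absurd h hno
    · exact h
  obtain ⟨i, hi, hival⟩ := List.getElem_of_mem hdrop
  have hlen : L + i < lst.length := by
    have := List.length_drop (i := L) (l := lst)
    omega
  have hidx : lst[L + i]'hlen = s := by
    rw [← hival]; rw [List.getElem_drop]
  have hall : ∀ x ∈ lst.take (L + i + 1), x < AT := by
    intro x hx
    obtain ⟨j, hj, hjval⟩ := List.getElem_of_mem hx
    have hj' : j < lst.length := lt_of_lt_of_le hj (by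
      simp)
    have hjle : j ≤ L + i := by
      have := List.length_take (i := L + i + 1) (l := lst)
      omega
    have hrel : lst.get ⟨j, hj'⟩ ≤ lst.get ⟨L + i, hlen⟩ :=
      hsort.rel_get_of_le (by exact hjle)
    have : x ≤ s := by
      rw [← hjval, List.getElem_take]
      simpa [hidx] using hrel
    exact lt_of_le_of_lt this hlt
  have htakelen : (lst.take (L + i + 1)).length = L + i + 1 := by
    rw [List.length_take]; omega
  have hcount2 : L + 1 ≤ lst.countP (fun x => decide (x < AT)) := by
    calc L + 1 ≤ (lst.take (L + i + 1)).length := by omega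
    _ = (lst.take (L + i + 1)).countP (fun x => decide (x < AT)) :=
        (List.countP_eq_length.mpr (by intro x hx; simpa using hall x hx)).symm
    _ ≤ lst.countP (fun x => decide (x < AT)) :=
        (List.take_sublist _ _).countP_le
  have hlink : S.countP (fun x => x < AT) = lst.countP (fun x => decide (x < AT)) := by
    conv_lhs => rw [← Multiset.sort_eq S (· ≤ ·)]
    exact Multiset.coe_countP _ _
  omega
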